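/- arXiv:2603.09539 — 3 statements merged into one kernel-verified Lean document; each statement's English description precedes it below -/
import Mathlib

section
/- For the 2×2 coordination game with diagonal payoff matrix [[s,0],[0,t]] with s > t > 0, and for any η > 0, the quantity x₁* = (1 + e^{−s/η}) / (1 + e^{−(s−t)/η} + 2 e^{−s/η}) satisfies x₁* ∈ (1/2, 1), and x₁* → 1 as η → 0⁺. -/
open Filter Real

lemma exp_neg_div_tendsto (c : ℝ) (hc : 0 < c) :
    Tendsto (fun η : ℝ => Real.exp (-c/η)) (nhdsWithin 0 (Set.Ioi 0)) (nhds 0) := by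
  have h1 : Tendsto (fun η : ℝ => -c/η) (nhdsWithin 0 (Set.Ioi 0)) atBot := by
    have h2 : Tendsto (fun η : ℝ => η⁻¹) (nhdsWithin 0 (Set.Ioi 0)) atTop :=
      tendsto_inv_nhdsGT_zero
    have h3 := h2.const_mul_atTop_of_neg (neg_neg_iff_pos.mpr hc)
    simpa [div_eq_mul_inv] using h3
  exact Real.tendsto_exp_atBot.comp h1

theorem stmt_3 (s t : ℝ) (ht : 0 < t) (hst : t < s) :
    (∀ η : ℝ, 0 < η →
      (1 + Real.exp (-s/η)) / (1 + Real.exp (-(s-t)/η) + 2 * Real.exp (-s/η))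
        ∈ Set.Ioo (1/2 : ℝ) 1) ∧
    Tendsto
      (fun η : ℝ =>
        (1 + Real.exp (-s/η)) / (1 + Real.exp (-(s-t)/η) + 2 * Real.exp (-s/η)))
      (nhdsWithin 0 (Set.Ioi 0)) (nhds 1) := by
  constructor
  · intro η hη
    set a := Real.exp (-s/η) with ha
    set b := Real.exp (-(s-t)/η) with hb
    have ha0 : 0 < a := Real.exp_pos _
    have hb0 : 0 < b := Real.exp_pos _
    have hb1 : b < 1 := by
      rw [hb]
      apply Real.exp_lt_one_iff.mpr
      have : 0 < (s - t) / η := div_pos (by linarith) hη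
      rw [neg_div]; linarith
    have hden : 0 < 1 + b + 2 * a := by linarith
    constructor
    · rw [div_lt_div_iff₀ (by norm_num) hden]; linarith
    · rw [div_lt_one hden]; linarith
  · have ha := exp_neg_div_tendsto s (by linarith)
    have hb := exp_neg_div_tendsto (s - t) (by linarith)
    have hnum : Tendsto (fun η : ℝ => 1 + Real.exp (-s/η))
        (nhdsWithin 0 (Set.Ioi 0)) (nhds 1) := by
      simpa using tendsto_const_nhds.add ha
    have hden : Tendsto (fun η : ℝ => 1 + Real.exp (-(s-t)/η) + 2 * Real.exp (-s/η))
        (nhdsWithin 0 (Set.Ioi 0)) (nhds 1) := by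
      have h := ((tendsto_const_nhds (x := (1:ℝ))).add hb).add (ha.const_mul 2)
      simpa using h
    have := hnum.div hden (by norm_num)
    simpa [Pi.div_def] using this
end

section
/- Let F : ℝ^n → ℝ^n be twice differentiable, η > 0, P_i(x) = exp(F_i(x)/η)/∑_j exp(F_j(x)/η), and R_i(x) = ∇F_i(x) − ∑_l P_l(x)∇F_l(x). Then the Hessian of P_i satisfies: Hess P_i(x) = η^{−2} P_i(x) · (R_i R_i^⊤ − ∑_l P_l R_l R_l^⊤) + η^{−1} P_i(x) · (Hess F_i(x) − ∑_l P_l(x) Hess F_l(x)). -/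
open Finset RealInnerProductSpace
set_option maxHeartbeats 1000000

/-- The Hessian of a scalar function, as the derivative of its gradient field. -/
noncomputable def hess {n : ℕ} (f : EuclideanSpace ℝ (Fin n) → ℝ)
    (x : EuclideanSpace ℝ (Fin n)) : EuclideanSpace ℝ (Fin n) →L[ℝ] EuclideanSpace ℝ (Fin n) :=
  fderiv ℝ (fun y => gradient f y) x

theorem stmt_7 (n : ℕ) (η : ℝ) (hη : 0 < η)
    (F : EuclideanSpace ℝ (Fin n) → Fin n → ℝ)
    (hF : ∀ i, ContDiff ℝ 2 (fun x => F x i))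
    (P : EuclideanSpace ℝ (Fin n) → Fin n → ℝ)
    (hP : ∀ x i, P x i = Real.exp (F x i / η) / ∑ j, Real.exp (F x j / η))
    (R : EuclideanSpace ℝ (Fin n) → Fin n → EuclideanSpace ℝ (Fin n))
    (hR : ∀ x i, R x i
      = gradient (fun y => F y i) x - ∑ l, P x l • gradient (fun y => F y l) x)
    (x y : EuclideanSpace ℝ (Fin n)) (i : Fin n) :
    hess (fun z => P z i) x y
      = (η⁻¹ ^ 2 * P x i) •
          (⟪R x i, y⟫ • R x i - ∑ l, P x l • (⟪R x l, y⟫ • R x l))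
        + (η⁻¹ * P x i) •
          (hess (fun z => F z i) x y - ∑ l, P x l • hess (fun z => F z l) x y) := by
  classical
  have hη0 : η ≠ 0 := ne_of_gt hη
  have hFd : ∀ j, Differentiable ℝ (fun z => F z j) := fun j => (hF j).differentiable two_ne_zero
  have hinner : ∀ (f : EuclideanSpace ℝ (Fin n) → ℝ) (z v : EuclideanSpace ℝ (Fin n)),
      ⟪gradient f z, v⟫ = fderiv ℝ f z v := fun f z v => InnerProductSpace.toDual_symm_apply
  have hSpos : ∀ z : EuclideanSpace ℝ (Fin n), (0:ℝ) < ∑ j, Real.exp (F z j / η) :=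
    fun z => Finset.sum_pos (fun j _ => Real.exp_pos _) ⟨i, Finset.mem_univ i⟩
  have hSne : ∀ z, (∑ j, Real.exp (F z j / η)) ≠ 0 := fun z => (hSpos z).ne'
  have hPsum : ∀ z, ∑ l, P z l = 1 := by
    intro z
    simp_rw [hP]
    rw [← Finset.sum_div, div_self (hSne z)]
  -- derivative of each exponential term
  have hE : ∀ (j : Fin n) (z), HasFDerivAt (fun w => Real.exp (F w j / η))
      ((η⁻¹ * Real.exp (F z j / η)) • fderiv ℝ (fun w => F w j) z) z := by
    intro j z
    have h1 : HasFDerivAt (fun w => F w j / η) (η⁻¹ • fderiv ℝ (fun w => F w j) z) z := by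
      simpa [div_eq_inv_mul] using ((hFd j z).hasFDerivAt.const_mul η⁻¹)
    have := h1.exp
    rwa [smul_smul, mul_comm] at this
  -- derivative of the sum
  have hS : ∀ z, HasFDerivAt (fun w => ∑ j, Real.exp (F w j / η))
      (∑ j, (η⁻¹ * Real.exp (F z j / η)) • fderiv ℝ (fun w => F w j) z) z := by
    intro z
    exact HasFDerivAt.fun_sum (fun j _ => hE j z)
  -- derivative of P _ l
  have hPd : ∀ (l : Fin n) (z), HasFDerivAt (fun w => P w l)
      ((η⁻¹ * P z l) • (fderiv ℝ (fun w => F w l) z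
        - ∑ m, P z m • fderiv ℝ (fun w => F w m) z)) z := by
    intro l z
    have hfun : (fun w => P w l)
        = fun w => Real.exp (F w l / η) * (∑ j, Real.exp (F w j / η))⁻¹ := by
      funext w; rw [hP, div_eq_mul_inv]
    rw [hfun]
    have hinv : HasFDerivAt (fun w => (∑ j, Real.exp (F w j / η))⁻¹)
        ((-(((∑ j, Real.exp (F z j / η)) ^ 2)⁻¹))
          • ∑ j, (η⁻¹ * Real.exp (F z j / η)) • fderiv ℝ (fun w => F w j) z) z := by
      have h2 := (hasDerivAt_inv (hSne z)).comp_hasFDerivAt z (hS z)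
      exact h2
    have h3 := (hE l z).mul' hinv
    refine h3.congr_fderiv (ContinuousLinearMap.ext fun v => ?_).symm
    have hPz : ∀ m, P z m = Real.exp (F z m / η) / (∑ j, Real.exp (F z j / η)) := fun m => hP z m
    simp only [ContinuousLinearMap.coe_smul', Pi.smul_apply, ContinuousLinearMap.coe_sub',
      Pi.sub_apply, ContinuousLinearMap.coe_sum', Finset.sum_apply,
      ContinuousLinearMap.add_apply, ContinuousLinearMap.smulRight_apply,
      smul_eq_mul, hPz]
    have habs : ∀ (E a : Fin n → ℝ), (∑ j, E j) ≠ 0 →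
        η⁻¹ * (E l / ∑ j, E j) * (a l - ∑ m, E m / (∑ j, E j) * a m)
          = E l * (-((∑ j, E j) ^ 2)⁻¹ * ∑ m, η⁻¹ * E m * a m)
            + η⁻¹ * E l * a l * (∑ j, E j)⁻¹ := by
      intro E a hS0
      have h1 : ∑ m, E m / (∑ j, E j) * a m = (∑ m, E m * a m) / (∑ j, E j) := by
        rw [Finset.sum_div]
        exact Finset.sum_congr rfl fun m _ => div_mul_eq_mul_div _ _ _
      have h2 : ∑ m, η⁻¹ * E m * a m = η⁻¹ * ∑ m, E m * a m := by
        rw [Finset.mul_sum]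
        exact Finset.sum_congr rfl fun m _ => by ring
      rw [h1, h2]
      field_simp
      ring
    exact habs (fun m => Real.exp (F z m / η)) (fun m => (fderiv ℝ (fun w => F w m) z) v)
      (hSne z)
  -- gradient of P
  have hGP : ∀ z (l : Fin n), HasGradientAt (fun w => P w l) ((η⁻¹ * P z l) • R z l) z := by
    intro z l
    rw [hasGradientAt_iff_hasFDerivAt]
    refine (hPd l z).congr_fderiv (ContinuousLinearMap.ext fun v => ?_).symm
    simp only [InnerProductSpace.toDual_apply_apply, ContinuousLinearMap.coe_smul', Pi.smul_apply,
      ContinuousLinearMap.coe_sub', Pi.sub_apply, ContinuousLinearMap.coe_sum',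
      Finset.sum_apply, smul_eq_mul, hR, inner_sub_left, sum_inner, real_inner_smul_left,
      hinner]
  have hgradP : ∀ z (l : Fin n), gradient (fun w => P w l) z = (η⁻¹ * P z l) • R z l :=
    fun z l => (hGP z l).gradient
  -- differentiability of the gradient fields of F
  have hgd : ∀ j : Fin n, Differentiable ℝ (fun z => gradient (fun w => F w j) z) := by
    intro j
    have h1 : ContDiff ℝ 1 (fderiv ℝ (fun z => F z j)) := (hF j).fderiv_right (by norm_num)
    exact ((InnerProductSpace.toDual ℝ
      (EuclideanSpace ℝ (Fin n))).symm.toContinuousLinearEquiv.toContinuousLinearMap.contDiff.comp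
        h1).differentiable one_ne_zero
  have hhF : ∀ j : Fin n, HasFDerivAt (fun z => gradient (fun w => F w j) z)
      (hess (fun w => F w j) x) x := fun j => (hgd j x).hasFDerivAt
  -- rewrite the gradient field of P i
  have hfun2 : (fun z => gradient (fun w => P w i) z)
      = fun z => (η⁻¹ * P z i) • (gradient (fun w => F w i) z
          - ∑ l, P z l • gradient (fun w => F w l) z) := by
    funext z; rw [hgradP z i, hR]
  have hc : HasFDerivAt (fun z => η⁻¹ * P z i)
      (η⁻¹ • ((η⁻¹ * P x i) • (fderiv ℝ (fun w => F w i) x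
        - ∑ m, P x m • fderiv ℝ (fun w => F w m) x))) x := (hPd i x).const_mul η⁻¹
  have hV : HasFDerivAt (fun z => gradient (fun w => F w i) z
        - ∑ l, P z l • gradient (fun w => F w l) z)
      (hess (fun w => F w i) x - ∑ l, (P x l • hess (fun w => F w l) x
        + ((η⁻¹ * P x l) • (fderiv ℝ (fun w => F w l) x
            - ∑ m, P x m • fderiv ℝ (fun w => F w m) x)).smulRight
          (gradient (fun w => F w l) x))) x := by
    exact (hhF i).sub (HasFDerivAt.fun_sum fun l _ => (hPd l x).fun_smul (hhF l))
  have hG := (hc.fun_smul hV)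
  rw [← hfun2] at hG
  have hPfd : hess (fun z => P z i) x
      = (η⁻¹ * P x i) • (hess (fun w => F w i) x - ∑ l, (P x l • hess (fun w => F w l) x
          + ((η⁻¹ * P x l) • (fderiv ℝ (fun w => F w l) x
              - ∑ m, P x m • fderiv ℝ (fun w => F w m) x)).smulRight
            (gradient (fun w => F w l) x)))
        + (η⁻¹ • ((η⁻¹ * P x i) • (fderiv ℝ (fun w => F w i) x
            - ∑ m, P x m • fderiv ℝ (fun w => F w m) x))).smulRight
          (gradient (fun w => F w i) x - ∑ l, P x l • gradient (fun w => F w l) x) :=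
    hG.fderiv
  rw [hPfd]
  simp only [ContinuousLinearMap.add_apply, ContinuousLinearMap.smul_apply,
    ContinuousLinearMap.sub_apply, ContinuousLinearMap.coe_sum', Finset.sum_apply,
    ContinuousLinearMap.smulRight_apply, ContinuousLinearMap.coe_smul', Pi.smul_apply,
    ContinuousLinearMap.coe_sub', Pi.sub_apply, smul_eq_mul]
  have hRy : ∀ l : Fin n, (fderiv ℝ (fun w => F w l) x) y
      - ∑ m, P x m * (fderiv ℝ (fun w => F w m) x) y = ⟪R x l, y⟫ := by
    intro l
    rw [hR]
    simp only [inner_sub_left, sum_inner, real_inner_smul_left, hinner]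
  simp_rw [hRy]
  rw [← hR]
  have hzero : ∑ l, P x l • R x l = 0 := by
    have h0 : ∀ l : Fin n, P x l • R x l = P x l • gradient (fun w => F w l) x
        - P x l • ∑ m, P x m • gradient (fun w => F w m) x := by
      intro l; rw [hR, smul_sub]
    rw [Finset.sum_congr rfl fun l _ => h0 l, Finset.sum_sub_distrib, ← Finset.sum_smul,
      hPsum, one_smul, sub_self]
  have hsum0 : ∑ l, P x l * ⟪R x l, y⟫ = 0 := by
    have h0 : ∀ l : Fin n, P x l * ⟪R x l, y⟫ = ⟪P x l • R x l, y⟫ :=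
      fun l => (real_inner_smul_left _ _ _).symm
    rw [Finset.sum_congr rfl fun l _ => h0 l, ← sum_inner, hzero, inner_zero_left]
  have hgl : ∀ l : Fin n, gradient (fun w => F w l) x
      = R x l + ∑ m, P x m • gradient (fun w => F w m) x := by
    intro l; rw [hR]; abel
  have hsum_eq : ∑ l, (η⁻¹ * P x l * ⟪R x l, y⟫) • gradient (fun w => F w l) x
      = η⁻¹ • ∑ l, P x l • (⟪R x l, y⟫ • R x l) := by
    have h1 : ∀ l : Fin n, (η⁻¹ * P x l * ⟪R x l, y⟫) • gradient (fun w => F w l) x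
        = η⁻¹ • (P x l • (⟪R x l, y⟫ • R x l))
          + (η⁻¹ * (P x l * ⟪R x l, y⟫)) • (∑ m, P x m • gradient (fun w => F w m) x) := by
      intro l
      conv_lhs => rw [hgl l]
      rw [smul_add]
      congr 1
      · rw [smul_smul, smul_smul, mul_assoc]
      · rw [mul_assoc]
    rw [Finset.sum_congr rfl fun l _ => h1 l, Finset.sum_add_distrib, ← Finset.smul_sum,
      ← Finset.sum_smul]
    have h2 : ∑ l, η⁻¹ * (P x l * ⟪R x l, y⟫) = 0 := by
      rw [← Finset.mul_sum, hsum0, mul_zero]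
    rw [h2, zero_smul, add_zero]
  have hmain : ∑ l, (P x l • (hess (fun w => F w l) x) y
        + (η⁻¹ * P x l * ⟪R x l, y⟫) • gradient (fun w => F w l) x)
      = ∑ l, P x l • (hess (fun w => F w l) x) y
        + η⁻¹ • ∑ l, P x l • (⟪R x l, y⟫ • R x l) := by
    rw [Finset.sum_add_distrib, hsum_eq]
  rw [hmain]
  module
end

section
/- Consider a two-action population game on the simplex X with continuous payoffs F̃₁, F̃₂ and the perturbed potential f(x₁) = ∫₀^{x₁}(F̃₁(t,1−t) − F̃₂(t,1−t))dt − η(x₁ log x₁ + (1−x₁)log(1−x₁)) for η > 0. Then any stationary point of f on [0,1] lies in the open interval (0,1), and x₁ ∈ (0,1) is a stationary point of f if and only if x₁ = exp(F̃₁(x)/η)/(exp(F̃₁(x)/η) + exp(F̃₂(x)/η)) where x = (x₁, 1−x₁); i.e., stationary points coincide with fixed points of the η-logit choice rule for F̃. -/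
open intervalIntegral Filter Set

noncomputable def ent (y : ℝ) : ℝ := y * Real.log y + (1 - y) * Real.log (1 - y)

lemma ent_symm : (fun y : ℝ => ent (1 - y)) = ent := by
  funext y
  simp only [ent]
  ring_nf

lemma ent_zero : ent 0 = 0 := by simp [ent]

lemma ent_slope_atBot :
    Tendsto (fun y => ent y / y) (nhdsWithin 0 (Set.Ioi 0)) atBot := by
  have h1 : Tendsto (fun y : ℝ => Real.log y) (nhdsWithin 0 (Set.Ioi 0)) atBot :=
    Real.tendsto_log_nhdsGT_zero
  -- slope of y ↦ log (1 - y) at 0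
  have dl : HasDerivAt (fun y : ℝ => Real.log (1 - y)) (-1) 0 := by
    have h := (Real.hasDerivAt_log (by norm_num : (1:ℝ) - 0 ≠ 0)).comp 0
      ((hasDerivAt_const (0:ℝ) (1:ℝ)).sub (hasDerivAt_id 0))
    rw [show ((1:ℝ) - 0)⁻¹ * (0 - 1) = -1 by norm_num] at h
    exact h
  have hsl : Tendsto (fun y : ℝ => Real.log (1 - y) / y) (nhdsWithin 0 {(0:ℝ)}ᶜ)
      (nhds (-1)) := by
    have := hasDerivAt_iff_tendsto_slope.mp dl
    refine this.congr (fun y => ?_)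
    simp [slope, Real.log_one, div_eq_inv_mul]
  have hsl' : Tendsto (fun y : ℝ => (1 - y) * (Real.log (1 - y) / y))
      (nhdsWithin 0 (Set.Ioi 0)) (nhds (1 * (-1))) := by
    have h2 : Tendsto (fun y : ℝ => (1:ℝ) - y) (nhdsWithin 0 (Set.Ioi 0)) (nhds 1) := by
      have : Tendsto (fun y : ℝ => (1:ℝ) - y) (nhds 0) (nhds (1 - 0)) :=
        (continuous_const.sub continuous_id).tendsto 0
      simpa using this.mono_left nhdsWithin_le_nhds
    exact h2.mul (hsl.mono_left (nhdsWithin_mono 0 (fun y hy => ne_of_gt hy)))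
  have hsum : Tendsto (fun y : ℝ => Real.log y + (1 - y) * (Real.log (1 - y) / y))
      (nhdsWithin 0 (Set.Ioi 0)) atBot := by
    have := h1.atBot_add (C := 1 * (-1)) hsl'
    simpa using this
  refine hsum.congr' ?_
  filter_upwards [self_mem_nhdsWithin] with y hy
  have hy0 : y ≠ 0 := ne_of_gt hy
  simp only [ent]
  field_simp

lemma ent_not_diff_zero : ¬ DifferentiableAt ℝ ent 0 := by
  intro h
  have hd := h.hasDerivAt
  have h' := (hasDerivAt_iff_tendsto_slope.mp hd).mono_left
    (nhdsWithin_mono 0 (fun y (hy : y ∈ Set.Ioi (0:ℝ)) => ne_of_gt hy))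
  have h'' : Tendsto (fun y => ent y / y) (nhdsWithin 0 (Set.Ioi 0))
      (nhds (deriv ent 0)) := h'.congr (fun y => by simp [slope, ent_zero, div_eq_inv_mul])
  exact not_tendsto_nhds_of_tendsto_atBot ent_slope_atBot _ h''

lemma ent_not_diff_one : ¬ DifferentiableAt ℝ ent 1 := by
  intro h
  apply ent_not_diff_zero
  have : DifferentiableAt ℝ (fun y : ℝ => ent (1 - y)) 0 := by
    have hc : DifferentiableAt ℝ (fun y : ℝ => (1:ℝ) - y) 0 :=
      (differentiableAt_const 1).sub differentiableAt_id
    have h' : DifferentiableAt ℝ ent ((fun y : ℝ => (1:ℝ) - y) 0) := by simpa using h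
    exact h'.comp 0 hc
  rwa [ent_symm] at this

lemma hasDerivAt_ent {x : ℝ} (h0 : 0 < x) (h1 : x < 1) :
    HasDerivAt ent (Real.log x - Real.log (1 - x)) x := by
  have h1' : (0:ℝ) < 1 - x := by linarith
  have d1 : HasDerivAt (fun y : ℝ => y * Real.log y) (Real.log x + 1) x := by
    have h := (hasDerivAt_id x).mul (Real.hasDerivAt_log h0.ne')
    refine h.congr_deriv ?_
    simp [h0.ne']
  have dl : HasDerivAt (fun y : ℝ => Real.log (1 - y)) ((1 - x)⁻¹ * (0 - 1)) x :=
    (Real.hasDerivAt_log h1'.ne').comp x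
      ((hasDerivAt_const x (1:ℝ)).sub (hasDerivAt_id x))
  have d2 : HasDerivAt (fun y : ℝ => (1 - y) * Real.log (1 - y))
      ((0 - 1) * Real.log (1 - x) + (1 - x) * ((1 - x)⁻¹ * (0 - 1))) x :=
    ((hasDerivAt_const x (1:ℝ)).sub (hasDerivAt_id x)).mul dl
  have := d1.add d2
  refine this.congr_deriv ?_
  linear_combination (-1 : ℝ) * (mul_inv_cancel₀ h1'.ne' : (1 - x) * (1 - x)⁻¹ = 1)

theorem stmt_19 (η : ℝ) (hη : 0 < η)
    (Ft₁ Ft₂ : ℝ × ℝ → ℝ) (hF₁ : Continuous Ft₁) (hF₂ : Continuous Ft₂)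
    (f : ℝ → ℝ)
    (hf : ∀ y : ℝ, f y =
      (∫ t in (0:ℝ)..y, (Ft₁ (t, 1 - t) - Ft₂ (t, 1 - t)))
        - η * (y * Real.log y + (1 - y) * Real.log (1 - y))) :
    (∀ x₁ ∈ Set.Icc (0:ℝ) 1, HasDerivAt f 0 x₁ → x₁ ∈ Set.Ioo (0:ℝ) 1) ∧
    (∀ x₁ ∈ Set.Ioo (0:ℝ) 1,
      (HasDerivAt f 0 x₁ ↔
        x₁ = Real.exp (Ft₁ (x₁, 1 - x₁) / η) /
          (Real.exp (Ft₁ (x₁, 1 - x₁) / η) + Real.exp (Ft₂ (x₁, 1 - x₁) / η)))) := by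
  set φ : ℝ → ℝ := fun t => Ft₁ (t, 1 - t) - Ft₂ (t, 1 - t) with hφdef
  have hφc : Continuous φ := by
    apply Continuous.sub
    · exact hF₁.comp (continuous_id.prodMk (continuous_const.sub continuous_id))
    · exact hF₂.comp (continuous_id.prodMk (continuous_const.sub continuous_id))
  have hG : ∀ x : ℝ, HasDerivAt (fun u => ∫ t in (0:ℝ)..u, φ t) (φ x) x := by
    intro x
    exact intervalIntegral.integral_hasDerivAt_right
      (hφc.intervalIntegrable 0 x)
      (hφc.stronglyMeasurableAtFilter _ _)
      hφc.continuousAt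
  have hfeq : ∀ y : ℝ, f y = (∫ t in (0:ℝ)..y, φ t) - η * ent y := by
    intro y; rw [hf y]; rfl
  constructor
  · intro x₁ hx hder
    by_contra hcon
    have hx01 : x₁ = 0 ∨ x₁ = 1 := by
      rcases hx with ⟨hl, hr⟩
      rcases lt_or_eq_of_le hl with hl' | hl'
      · rcases lt_or_eq_of_le hr with hr' | hr'
        · exact absurd ⟨hl', hr'⟩ hcon
        · right; exact hr'.symm ▸ rfl
      · left; exact hl'.symm
    have hentd : DifferentiableAt ℝ ent x₁ := by
      have h2 : HasDerivAt (fun y => ((∫ t in (0:ℝ)..y, φ t) - f y) / η)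
          ((φ x₁ - 0) / η) x₁ := ((hG x₁).sub hder).div_const η
      have heq : (fun y => ((∫ t in (0:ℝ)..y, φ t) - f y) / η) = ent := by
        funext y
        rw [hfeq y]
        field_simp
        ring
      rw [heq] at h2
      exact h2.differentiableAt
    rcases hx01 with h | h
    · exact ent_not_diff_zero (h ▸ hentd)
    · exact ent_not_diff_one (h ▸ hentd)
  · rintro x₁ ⟨h0, h1⟩
    have h1' : (0:ℝ) < 1 - x₁ := by linarith
    have hfd : HasDerivAt f (φ x₁ - η * (Real.log x₁ - Real.log (1 - x₁))) x₁ := by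
      have h2 : HasDerivAt (fun y => (∫ t in (0:ℝ)..y, φ t) - η * ent y)
          (φ x₁ - η * (Real.log x₁ - Real.log (1 - x₁))) x₁ :=
        (hG x₁).sub ((hasDerivAt_ent h0 h1).const_mul η)
      exact h2.congr_of_eventuallyEq (Filter.Eventually.of_forall (fun y => hfeq y))
    set A := Real.exp (Ft₁ (x₁, 1 - x₁) / η) with hA
    set B := Real.exp (Ft₂ (x₁, 1 - x₁) / η) with hB
    have hApos : 0 < A := Real.exp_pos _
    have hBpos : 0 < B := Real.exp_pos _
    have key : φ x₁ - η * (Real.log x₁ - Real.log (1 - x₁)) = 0 ↔ x₁ = A / (A + B) := by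
      have hlogA : Real.log A = Ft₁ (x₁, 1 - x₁) / η := Real.log_exp _
      have hlogB : Real.log B = Ft₂ (x₁, 1 - x₁) / η := Real.log_exp _
      have hφx : φ x₁ = η * (Real.log A - Real.log B) := by
        rw [hlogA, hlogB]
        field_simp
        rfl
      rw [hφx]
      constructor
      · intro h
        have hlogeq : Real.log x₁ - Real.log (1 - x₁) = Real.log A - Real.log B := by
          have hη' := hη.ne'
          nlinarith [h]
        have : Real.log (x₁ / (1 - x₁)) = Real.log (A / B) := by
          rw [Real.log_div h0.ne' h1'.ne', Real.log_div hApos.ne' hBpos.ne', hlogeq]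
        have hratio : x₁ / (1 - x₁) = A / B := by
          have hpos1 : (0:ℝ) < x₁ / (1 - x₁) := div_pos h0 h1'
          have hpos2 : (0:ℝ) < A / B := div_pos hApos hBpos
          exact Real.log_injOn_pos (Set.mem_Ioi.mpr hpos1) (Set.mem_Ioi.mpr hpos2) this
        have hcross : x₁ * B = A * (1 - x₁) := by
          field_simp at hratio
          linarith [hratio]
        have hAB : (0:ℝ) < A + B := by linarith
        field_simp
        linarith [hcross]
      · intro h
        have hAB : (0:ℝ) < A + B := by positivity
        have h1x : 1 - x₁ = B / (A + B) := by
          rw [h]; field_simp; ring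
        have e1 : Real.log x₁ = Real.log A - Real.log (A + B) := by
          rw [h, Real.log_div hApos.ne' hAB.ne']
        have e2 : Real.log (1 - x₁) = Real.log B - Real.log (A + B) := by
          rw [h1x, Real.log_div hBpos.ne' hAB.ne']
        rw [e1, e2]; ring
    constructor
    · intro hder
      exact key.mp (hfd.unique hder)
    · intro hx
      have := key.mpr hx
      rwa [this] at hfd
end
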